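/- Suppose an assignment {t_b}_{b∈L} solves problem (B) with budget k, and let ν ∈ L be any index maximizing β_p(t_b, r_b) over b ∈ L. Then the assignment {t'_b}_{b∈L} defined by t'_ν = t_ν + 1 and t'_b = t_b for b ≠ ν solves problem (B) with budget k+1 (this is the correctness of the greedy step of the BAR solver). -/
import Mathlib


/-- `betaP p t r = ∑_{i=0}^{r-1} C(t,i) (1-p)^i p^(t-i)`. -/
noncomputable def betaP (p : ℝ) (t r : ℕ) : ℝ :=
  ∑ i ∈ Finset.range r, (t.choose i : ℝ) * (1 - p) ^ i * p ^ (t - i)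

/-- Expected rank function `E(r,t) = ∑_{i=0}^{t} C(t,i) (1-p)^i p^(t-i) * min{i,r}`. -/
noncomputable def expRank (p : ℝ) (r t : ℕ) : ℝ :=
  ∑ i ∈ Finset.range (t + 1),
    (t.choose i : ℝ) * (1 - p) ^ i * p ^ (t - i) * ((min i r : ℕ) : ℝ)

private lemma sum_if_lt (g : ℕ → ℝ) {r N : ℕ} (h : r ≤ N) :
    ∑ i ∈ Finset.range N, (if i < r then g i else 0) = ∑ i ∈ Finset.range r, g i := by
  rw [← Finset.sum_subset (Finset.range_subset_range.2 h)
      (fun i _ hi => by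
        simp only [Finset.mem_range, not_lt] at hi
        rw [if_neg (by omega)])]
  exact Finset.sum_congr rfl fun i hi => by rw [if_pos (Finset.mem_range.1 hi)]

private lemma betaP_alt (p : ℝ) (t r : ℕ) :
    betaP p t r
      = ∑ i ∈ Finset.range (t + 1),
          (if i < r then (t.choose i : ℝ) * (1 - p) ^ i * p ^ (t - i) else 0) := by
  rw [betaP, ← sum_if_lt (fun i => (t.choose i : ℝ) * (1 - p) ^ i * p ^ (t - i))
      (le_max_left r (t + 1))]
  exact (Finset.sum_subset (Finset.range_subset_range.2 (le_max_right r (t + 1)))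
      (fun i _ hi => by
        simp only [Finset.mem_range, not_lt] at hi
        rw [Nat.choose_eq_zero_of_lt (by omega)]
        simp)).symm

private lemma expRank_succ (p : ℝ) (r t : ℕ) :
    expRank p r (t + 1) = expRank p r t + (1 - p) * betaP p t r := by
  set G : ℕ → ℝ := fun i =>
    (t.choose i : ℝ) * (1 - p) ^ i * p ^ (t - i) * ((min i r : ℕ) : ℝ) with hG
  have hG0 : G 0 = 0 := by simp [hG]
  have hGt : G (t + 1) = 0 := by simp [hG, Nat.choose_succ_self]
  have hshift : ∑ i ∈ Finset.range (t + 1), G (i + 1) = ∑ i ∈ Finset.range (t + 1), G i := by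
    have h1 := Finset.sum_range_succ' G (t + 1)
    have h2 := Finset.sum_range_succ G (t + 1)
    rw [hG0, hGt] at *
    linarith [h1, h2]
  have hpt : ∀ i,
      (((t + 1).choose (i + 1) : ℝ)) * (1 - p) ^ (i + 1) * p ^ (t + 1 - (i + 1))
          * ((min (i + 1) r : ℕ) : ℝ)
        = (1 - p) * G i
          + (1 - p) * (if i < r then (t.choose i : ℝ) * (1 - p) ^ i * p ^ (t - i) else 0)
          + p * G (i + 1) := by
    intro i
    have hc : (((t + 1).choose (i + 1) : ℕ) : ℝ) = (t.choose i : ℝ) + (t.choose (i + 1) : ℝ) := by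
      rw [Nat.choose_succ_succ]; push_cast; ring
    have hsub : t + 1 - (i + 1) = t - i := by omega
    have hmin : ((min (i + 1) r : ℕ) : ℝ)
        = ((min i r : ℕ) : ℝ) + (if i < r then (1 : ℝ) else 0) := by
      by_cases h : i < r
      · rw [if_pos h]
        have : min (i + 1) r = min i r + 1 := by omega
        rw [this]; push_cast; ring
      · rw [if_neg h]
        have : min (i + 1) r = min i r := by omega
        rw [this, add_zero]
    simp only [hG]
    rw [hsub, hc, hmin]
    by_cases hit : i < t
    · have h1 : t - i = (t - (i + 1)) + 1 := by omega
      rw [h1]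
      by_cases h : i < r
      · rw [if_pos h, if_pos h]; push_cast; ring
      · rw [if_neg h, if_neg h]; push_cast; ring
    · have h0 : (t.choose (i + 1) : ℝ) = 0 := by
        rw [Nat.choose_eq_zero_of_lt (by omega)]; simp
      rw [h0]
      by_cases h : i < r
      · rw [if_pos h, if_pos h]; push_cast; ring
      · rw [if_neg h, if_neg h]; push_cast; ring
  have hE : expRank p r t = ∑ i ∈ Finset.range (t + 1), G i := rfl
  have hL : expRank p r (t + 1)
      = ∑ i ∈ Finset.range (t + 1),
          (((t + 1).choose (i + 1) : ℝ)) * (1 - p) ^ (i + 1) * p ^ (t + 1 - (i + 1))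
            * ((min (i + 1) r : ℕ) : ℝ) := by
    rw [expRank, Finset.sum_range_succ']
    simp
  rw [hL, Finset.sum_congr rfl (fun i _ => hpt i)]
  rw [Finset.sum_add_distrib, Finset.sum_add_distrib, ← Finset.mul_sum, ← Finset.mul_sum,
    ← Finset.mul_sum, hshift, ← betaP_alt, hE]
  ring

private lemma betaP_nonneg (p : ℝ) (hp0 : 0 ≤ p) (hp1 : p ≤ 1) (t r : ℕ) :
    0 ≤ betaP p t r := by
  apply Finset.sum_nonneg
  intro i _
  have h1 : (0:ℝ) ≤ 1 - p := by linarith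
  positivity

private lemma betaP_mono_r (p : ℝ) (hp0 : 0 ≤ p) (hp1 : p ≤ 1) (t : ℕ) {r r' : ℕ}
    (h : r ≤ r') : betaP p t r ≤ betaP p t r' := by
  apply Finset.sum_le_sum_of_subset_of_nonneg (Finset.range_subset_range.2 h)
  intro i _ _
  have h1 : (0:ℝ) ≤ 1 - p := by linarith
  positivity

private lemma betaP_succ (p : ℝ) (t s : ℕ) :
    betaP p (t + 1) (s + 1) = p * betaP p t (s + 1) + (1 - p) * betaP p t s := by
  have hpt : ∀ i,
      (((t + 1).choose (i + 1) : ℕ) : ℝ) * (1 - p) ^ (i + 1) * p ^ (t + 1 - (i + 1))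
        = (1 - p) * ((t.choose i : ℝ) * (1 - p) ^ i * p ^ (t - i))
          + p * ((t.choose (i + 1) : ℝ) * (1 - p) ^ (i + 1) * p ^ (t - (i + 1))) := by
    intro i
    have hc : (((t + 1).choose (i + 1) : ℕ) : ℝ) = (t.choose i : ℝ) + (t.choose (i + 1) : ℝ) := by
      rw [Nat.choose_succ_succ]; push_cast; ring
    have hsub : t + 1 - (i + 1) = t - i := by omega
    rw [hsub, hc]
    by_cases hit : i < t
    · have h1 : t - i = (t - (i + 1)) + 1 := by omega
      rw [h1]; ring
    · have h0 : (t.choose (i + 1) : ℝ) = 0 := by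
        rw [Nat.choose_eq_zero_of_lt (by omega)]; simp
      rw [h0]; ring
  have hL : betaP p (t + 1) (s + 1)
      = ∑ i ∈ Finset.range s,
          (((t + 1).choose (i + 1) : ℕ) : ℝ) * (1 - p) ^ (i + 1) * p ^ (t + 1 - (i + 1))
        + p ^ (t + 1) := by
    rw [betaP, Finset.sum_range_succ']
    simp
  have hR : betaP p t (s + 1)
      = ∑ i ∈ Finset.range s, (t.choose (i + 1) : ℝ) * (1 - p) ^ (i + 1) * p ^ (t - (i + 1))
        + p ^ t := by
    rw [betaP, Finset.sum_range_succ']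
    simp
  rw [hL, Finset.sum_congr rfl (fun i _ => hpt i), Finset.sum_add_distrib,
    ← Finset.mul_sum, ← Finset.mul_sum, hR, betaP]
  ring

private lemma betaP_anti_step (p : ℝ) (hp0 : 0 ≤ p) (hp1 : p ≤ 1) (t r : ℕ) :
    betaP p (t + 1) r ≤ betaP p t r := by
  cases r with
  | zero => simp [betaP]
  | succ s =>
      rw [betaP_succ]
      have h1 : betaP p t s ≤ betaP p t (s + 1) := betaP_mono_r p hp0 hp1 t (by omega)
      nlinarith [betaP_nonneg p hp0 hp1 t (s + 1)]

private lemma betaP_anti (p : ℝ) (hp0 : 0 ≤ p) (hp1 : p ≤ 1) {t t' : ℕ} (h : t ≤ t')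
    (r : ℕ) : betaP p t' r ≤ betaP p t r := by
  induction t' , h using Nat.le_induction with
  | base => exact le_refl _
  | succ n hn ih => exact le_trans (betaP_anti_step p hp0 hp1 n r) ih

theorem stmt15 {ι : Type*} [DecidableEq ι] (p : ℝ) (hp0 : 0 < p) (hp1 : p < 1)
    (L : Finset ι) (r : ι → ℕ) (k : ℕ)
    (t : ι → ℕ) (hfeas : (∑ b ∈ L, t b) = k)
    (hopt : ∀ t' : ι → ℕ, (∑ b ∈ L, t' b) = k →
      ∑ b ∈ L, expRank p (r b) (t' b) ≤ ∑ b ∈ L, expRank p (r b) (t b))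
    (ν : ι) (hν : ν ∈ L)
    (hmax : ∀ b ∈ L, betaP p (t b) (r b) ≤ betaP p (t ν) (r ν)) :
    (∑ b ∈ L, Function.update t ν (t ν + 1) b) = k + 1 ∧
    ∀ t' : ι → ℕ, (∑ b ∈ L, t' b) = k + 1 →
      ∑ b ∈ L, expRank p (r b) (t' b) ≤
        ∑ b ∈ L, expRank p (r b) (Function.update t ν (t ν + 1) b) := by
  have hq0 : (0:ℝ) ≤ 1 - p := by linarith
  -- sum of expRank over an updated assignment
  have hupdate : ∀ (s : ι → ℕ) (c : ι), c ∈ L → ∀ v : ℕ,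
      ∑ b ∈ L, expRank p (r b) (Function.update s c v b)
        = ∑ b ∈ L, expRank p (r b) (s b) - expRank p (r c) (s c) + expRank p (r c) v := by
    intro s c hc v
    have hcong : ∀ b ∈ L, expRank p (r b) (Function.update s c v b)
        = Function.update (fun b => expRank p (r b) (s b)) c (expRank p (r c) v) b := by
      intro b _
      by_cases hb : b = c
      · subst hb; simp
      · simp [Function.update_of_ne hb]
    rw [Finset.sum_congr rfl hcong, Finset.sum_update_of_mem hc]
    have := Finset.sum_eq_sum_sdiff_singleton_add hc (fun b => expRank p (r b) (s b))
    rw [this]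
    ring
  have hsum_upd : (∑ b ∈ L, Function.update t ν (t ν + 1) b) = k + 1 := by
    rw [Finset.sum_update_of_mem hν]
    have := Finset.sum_eq_sum_sdiff_singleton_add hν t
    omega
  refine ⟨hsum_upd, ?_⟩
  intro t' ht'
  -- the value of the greedy assignment
  have hgreedy : ∑ b ∈ L, expRank p (r b) (Function.update t ν (t ν + 1) b)
      = ∑ b ∈ L, expRank p (r b) (t b) + (1 - p) * betaP p (t ν) (r ν) := by
    rw [hupdate t ν hν (t ν + 1), expRank_succ]
    ring
  -- find a coordinate where t' exceeds t
  obtain ⟨b₀, hb₀L, hb₀⟩ : ∃ b ∈ L, t b < t' b := by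
    by_contra hcon
    push_neg at hcon
    have : ∑ b ∈ L, t' b ≤ ∑ b ∈ L, t b := Finset.sum_le_sum hcon
    omega
  obtain ⟨a, ha⟩ : ∃ a, t' b₀ = a + 1 := ⟨t' b₀ - 1, by omega⟩
  have hta : t b₀ ≤ a := by omega
  -- reduced assignment
  set t'' : ι → ℕ := Function.update t' b₀ a with ht''def
  have hsum'' : ∑ b ∈ L, t'' b = k := by
    rw [ht''def, Finset.sum_update_of_mem hb₀L]
    have := Finset.sum_eq_sum_sdiff_singleton_add hb₀L t'
    omega
  have h1 : ∑ b ∈ L, expRank p (r b) (t'' b) ≤ ∑ b ∈ L, expRank p (r b) (t b) :=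
    hopt _ hsum''
  -- express the sum for t' via t''
  have ht'eq : t' = Function.update t'' b₀ (a + 1) := by
    funext b
    by_cases hb : b = b₀
    · subst hb; simp [ht''def, ha]
    · simp [ht''def, Function.update_of_ne hb]
  have hsplit : ∑ b ∈ L, expRank p (r b) (t' b)
      = ∑ b ∈ L, expRank p (r b) (t'' b) - expRank p (r b₀) (t'' b₀)
        + expRank p (r b₀) (a + 1) := by
    conv_lhs => rw [ht'eq]
    exact hupdate t'' b₀ hb₀L (a + 1)
  have ht''b₀ : t'' b₀ = a := by simp [ht''def]
  have hbeta : betaP p a (r b₀) ≤ betaP p (t ν) (r ν) :=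
    le_trans (betaP_anti p (le_of_lt hp0) (le_of_lt hp1) hta (r b₀)) (hmax b₀ hb₀L)
  have hbeta' : (1 - p) * betaP p a (r b₀) ≤ (1 - p) * betaP p (t ν) (r ν) :=
    mul_le_mul_of_nonneg_left hbeta hq0
  rw [hsplit, ht''b₀, expRank_succ, hgreedy]
  linarith
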